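/- Let X be a Banach space and T a bounded linear operator on X. If T/c is hypercyclic for some real number c ≥ 1, then T is convex-cyclic. -/

import Mathlib

/-- If `T/c` is hypercyclic on a Banach space `X` for some real `c ≥ 1`,
then `T` is convex-cyclic. -/
theorem convexCyclic_of_hypercyclic_div
    {𝕜 : Type*} [RCLike 𝕜] {X : Type*} [NormedAddCommGroup X] [NormedSpace 𝕜 X]
    [NormedSpace ℝ X] [IsScalarTower ℝ 𝕜 X] [CompleteSpace X] (T : X →L[𝕜] X) (c : ℝ) (hc : 1 ≤ c)
    (h : ∃ x : X, Dense (Set.range fun n : ℕ => ((((1 / c : ℝ) : 𝕜) • T) ^ n) x)) :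
    ∃ x : X, Dense (convexHull ℝ (Set.range fun n : ℕ => (T ^ n) x)) := by
  obtain ⟨x, hx⟩ := h
  have hc0 : (0 : ℝ) < c := lt_of_lt_of_le zero_lt_one hc
  set s : Set X := Set.range fun n : ℕ => (T ^ n) x with hs
  set K : Set X := closure (convexHull ℝ s) with hKdef
  have hKconv : Convex ℝ K := (convex_convexHull ℝ s).closure
  have horb : ∀ n : ℕ, (T ^ n) x ∈ convexHull ℝ s := fun n =>
    subset_convexHull ℝ s ⟨n, rfl⟩
  -- orbit of S in terms of orbit of T
  have hSn : ∀ n : ℕ, ((((1 / c : ℝ) : 𝕜) • T) ^ n) x = (1 / c) ^ n • (T ^ n) x := by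
    intro n
    rw [smul_pow, ContinuousLinearMap.smul_apply,
      show (((1 / c : ℝ) : 𝕜)) ^ n = (((1 / c) ^ n : ℝ) : 𝕜) by push_cast; ring,
      ← RCLike.real_smul_eq_coe_smul]
  have hcn : ∀ n : ℕ, (1 : ℝ) ≤ c ^ n := fun n => one_le_pow₀ hc
  -- Step 1 : 0 ∈ K
  have h0 : (0 : X) ∈ K := by
    rw [Metric.mem_closure_iff]
    intro ε hε
    obtain ⟨y, hyball, hymem⟩ := Metric.dense_iff.mp hx (-x) ε hε
    obtain ⟨n, rfl⟩ := hymem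
    have hden : (0 : ℝ) < 1 + c ^ n := by positivity
    set a : ℝ := 1 / (1 + c ^ n) with ha
    set b : ℝ := c ^ n / (1 + c ^ n) with hb
    have hab : a + b = 1 := by rw [ha, hb]; field_simp
    have ha0 : 0 ≤ a := by positivity
    have hb0 : 0 ≤ b := by positivity
    refine ⟨a • (T ^ n) x + b • (T ^ 0) x,
      (convex_convexHull ℝ s) (horb n) (horb 0) ha0 hb0 hab, ?_⟩
    have hT0 : (T ^ 0) x = x := rfl
    have hTn : a • (T ^ n) x = b • ((((1 / c : ℝ) : 𝕜) • T) ^ n) x := by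
      rw [hSn n, smul_smul, hb, ha]
      congr 1
      field_simp
      rw [one_div, inv_pow, mul_inv_cancel₀ (pow_ne_zero n hc0.ne')]
    rw [dist_comm, dist_zero_right, hT0, hTn, ← smul_add]
    have hnorm : ‖((((1 / c : ℝ) : 𝕜) • T) ^ n) x + x‖ < ε := by
      have := Metric.mem_ball.mp hyball
      rwa [dist_eq_norm, sub_neg_eq_add] at this
    have hb1 : b < 1 := by
      rw [hb, div_lt_one hden]; linarith
    calc ‖b • (((((1 / c : ℝ) : 𝕜) • T) ^ n) x + x)‖
        = b * ‖((((1 / c : ℝ) : 𝕜) • T) ^ n) x + x‖ := by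
          rw [norm_smul, Real.norm_eq_abs, abs_of_nonneg hb0]
      _ < 1 * ε := by
          rcases eq_or_lt_of_le hb0 with hb0' | hb0'
          · rw [← hb0', zero_mul, one_mul]; exact hε
          · exact mul_lt_mul' hb1.le hnorm (norm_nonneg _) zero_lt_one |>.trans_le (le_of_eq rfl)
      _ = ε := one_mul ε
  -- Step 2 : the S-orbit is contained in K
  have hmem : ∀ n : ℕ, ((((1 / c : ℝ) : 𝕜) • T) ^ n) x ∈ K := by
    intro n
    rw [hSn n]
    have h1 : (0 : ℝ) ≤ (1 / c) ^ n := by positivity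
    have h2 : (1 / c) ^ n ≤ 1 := by
      rw [one_div, inv_pow]
      exact inv_le_one_of_one_le₀ (hcn n)
    have := hKconv (subset_closure (horb n)) h0 h1 (by linarith : (0:ℝ) ≤ 1 - (1/c)^n)
      (by ring : (1 / c) ^ n + (1 - (1 / c) ^ n) = 1)
    simpa using this
  -- Step 3 : conclude
  refine ⟨x, dense_closure.mp ?_⟩
  exact hx.mono (by rintro y ⟨n, rfl⟩; exact hmem n)
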